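/- arXiv:2312.09617 — 2 statements merged into one kernel-verified Lean document; each statement's English description precedes it below -/
import Mathlib

section
/- Let λ ≥ 1 be real and let f belong to the class S*_{Σ,q}(λ;φ). Then the coefficients of the associated Carathéodory functions satisfy d₁ = −c₁, and the second Maclaurin coefficient of f is a₂ = E₁c₁/(2λ[2]_q). -/
open Complex Metric Set

noncomputable def symQ (q x : ℝ) : ℝ := (Real.rpow q x - Real.rpow q (-x)) / (q - q⁻¹)

noncomputable def Dq (q : ℝ) (f : ℂ → ℂ) (z : ℂ) : ℂ :=
  if z = 0 then deriv f 0
  else (f ((q : ℂ) * z) - f (z / (q : ℂ))) / (((q : ℂ) - (q : ℂ)⁻¹) * z)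

def IsSchwarz (u : ℂ → ℂ) : Prop :=
  AnalyticOnNhd ℂ u (ball 0 1) ∧ u 0 = 0 ∧ ∀ z ∈ ball (0 : ℂ) 1, u z ∈ ball (0 : ℂ) 1

open Filter Topology

lemma ofScalars_coeff' (k : ℕ → ℂ) (n : ℕ) :
    (FormalMultilinearSeries.ofScalars ℂ k).coeff n = k n := by
  simpa using FormalMultilinearSeries.ofScalars_apply_eq (E := ℂ) k 1 n

lemma hasSum_of_eq_tsum {k : ℕ → ℂ} {w s : ℂ} (hs : s = ∑' n, k n * w ^ n) (hne : s ≠ 0) :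
    HasSum (fun n => k n * w ^ n) s := by
  by_cases hsum : Summable fun n => k n * w ^ n
  · exact hs ▸ hsum.hasSum
  · exact absurd (hs.trans (tsum_eq_zero_of_not_summable hsum)) hne

lemma hasSum_zero_pt (k : ℕ → ℂ) : HasSum (fun n => k n * (0:ℂ) ^ n) (k 0) := by
  have h : HasSum (fun n => k n * (0:ℂ) ^ n) (k 0 * (0:ℂ) ^ 0) :=
    hasSum_single 0 (fun b hb => by simp [zero_pow hb])
  simpa using h

lemma hasFPowerSeriesAt_ofScalars {F : ℂ → ℂ} {k : ℕ → ℂ}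
    (h : ∀ᶠ z in 𝓝 (0:ℂ), HasSum (fun n => k n * z ^ n) (F z)) :
    HasFPowerSeriesAt F (FormalMultilinearSeries.ofScalars ℂ k) 0 := by
  rw [hasFPowerSeriesAt_iff]
  filter_upwards [h] with z hz
  have hfun : (fun n => z ^ n • (FormalMultilinearSeries.ofScalars ℂ k).coeff n)
      = fun n => k n * z ^ n := by
    funext n; rw [ofScalars_coeff', smul_eq_mul, mul_comm]
  rw [hfun, zero_add]; exact hz

lemma eventuallyEq_of_punctured {F G : ℂ → ℂ} (hF : ContinuousAt F 0) (hG : ContinuousAt G 0)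
    (h : ∀ᶠ z in 𝓝[≠] (0:ℂ), F z = G z) : F =ᶠ[𝓝 (0:ℂ)] G := by
  have tF : Tendsto F (𝓝[≠] (0:ℂ)) (𝓝 (F 0)) := hF.tendsto.mono_left nhdsWithin_le_nhds
  have tG : Tendsto G (𝓝[≠] (0:ℂ)) (𝓝 (G 0)) := hG.tendsto.mono_left nhdsWithin_le_nhds
  have h0 : F 0 = G 0 := tendsto_nhds_unique (tF.congr' h) tG
  rw [Filter.EventuallyEq, ← nhdsNE_sup_pure (0:ℂ), eventually_sup]
  exact ⟨h, by simpa using h0⟩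

lemma symQ_two_eq (q : ℝ) (hq0 : 0 < q) :
    ((symQ q 2 : ℝ) : ℂ) = ((q:ℂ)^2 - ((q:ℂ)⁻¹)^2) / ((q:ℂ) - (q:ℂ)⁻¹) := by
  have e1 : Real.rpow q 2 = q ^ (2:ℕ) := by
    rw [show Real.rpow q 2 = q ^ ((2:ℕ):ℝ) by norm_num [Real.rpow_natCast], Real.rpow_natCast]
  have e2 : Real.rpow q (-2) = (q ^ (2:ℕ))⁻¹ := by
    rw [show Real.rpow q (-2) = q ^ (-((2:ℕ):ℝ)) by norm_num, Real.rpow_neg hq0.le,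
      Real.rpow_natCast]
  rw [symQ, e1, e2]
  push_cast
  rw [inv_pow]

set_option maxRecDepth 8000 in
lemma main_step (q : ℝ) (hq0 : 0 < q) (hq1 : q < 1)
    (F : ℂ → ℂ) (p : FormalMultilinearSeries ℂ ℂ ℂ)
    (hp : HasFPowerSeriesAt F p 0) (hp1 : p.coeff 1 = 1)
    (φ u : ℂ → ℂ) (hφa : AnalyticAt ℂ φ 0)
    (hu : IsSchwarz u) (lam : ℝ)
    (hsub : ∀ z ∈ ball (0:ℂ) 1, z ≠ 0 →
      2 * z * Dq q F z ^ (lam : ℂ) / (F z - F (-z)) = φ (u z)) :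
    (lam : ℂ) * ((symQ q 2 : ℝ) : ℂ) * p.coeff 2 = deriv φ 0 * deriv u 0 := by
  have hqR : q ≠ q⁻¹ := by
    have h1 : (1:ℝ) < q⁻¹ := (one_lt_inv₀ hq0).mpr hq1
    intro h; rw [h] at hq1; linarith
  have hqc : (q:ℂ) ≠ 0 := by exact_mod_cast hq0.ne'
  have hQ : (q:ℂ) - (q:ℂ)⁻¹ ≠ 0 := by
    rw [← Complex.ofReal_inv, ← Complex.ofReal_sub]
    exact Complex.ofReal_ne_zero.mpr (sub_ne_zero.mpr hqR)
  -- the series coefficients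
  set kG : ℕ → ℂ := fun n => p.coeff n * ((q:ℂ)^n - ((q:ℂ)⁻¹)^n) / ((q:ℂ) - (q:ℂ)⁻¹) with hkG
  set kS : ℕ → ℂ := fun n => p.coeff n * (1 - (-1:ℂ)^n) with hkS
  set GG : ℂ → ℂ := fun z => (F ((q:ℂ)*z) - F (z/(q:ℂ))) / ((q:ℂ) - (q:ℂ)⁻¹) with hGG
  set SS : ℂ → ℂ := fun z => F z - F (-z) with hSS
  -- HasSum representation of F near 0
  have hp' : ∀ᶠ z in 𝓝 (0:ℂ), HasSum (fun n => z ^ n • p.coeff n) (F z) := by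
    simpa using hasFPowerSeriesAt_iff.mp hp
  obtain ⟨ε, hε, hFs⟩ := Metric.eventually_nhds_iff.mp hp'
  -- the series for GG
  have hGsum : ∀ᶠ z in 𝓝 (0:ℂ), HasSum (fun n => kG n * z ^ n) (GG z) := by
    have hball : ∀ᶠ z in 𝓝 (0:ℂ), ‖z‖ < ε * q := by
      filter_upwards [Metric.ball_mem_nhds (0:ℂ) (by positivity : (0:ℝ) < ε * q)] with z hz
      simpa [mem_ball, dist_zero_right] using hz
    filter_upwards [hball] with z hz
    have h1 : HasSum (fun n => ((q:ℂ)*z) ^ n • p.coeff n) (F ((q:ℂ)*z)) := by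
      apply hFs
      rw [dist_zero_right, norm_mul, Complex.norm_real, Real.norm_of_nonneg hq0.le]
      nlinarith [norm_nonneg z]
    have h2 : HasSum (fun n => (z/(q:ℂ)) ^ n • p.coeff n) (F (z/(q:ℂ))) := by
      apply hFs
      rw [dist_zero_right, norm_div, Complex.norm_real, Real.norm_of_nonneg hq0.le]
      rw [div_lt_iff₀ hq0]
      linarith
    have h4 := (h1.sub h2).div_const ((q:ℂ) - (q:ℂ)⁻¹)
    have hfun : (fun n => (((q:ℂ)*z) ^ n • p.coeff n - (z/(q:ℂ)) ^ n • p.coeff n)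
        / ((q:ℂ) - (q:ℂ)⁻¹)) = fun n => kG n * z ^ n := by
      funext n
      simp only [smul_eq_mul, hkG]
      rw [mul_pow, div_pow]
      rw [div_eq_mul_inv (z ^ n), ← inv_pow]
      ring
    rw [hfun] at h4
    exact h4
  have hpG : HasFPowerSeriesAt GG (FormalMultilinearSeries.ofScalars ℂ kG) 0 :=
    hasFPowerSeriesAt_ofScalars hGsum
  -- the series for SS
  have hSsum : ∀ᶠ z in 𝓝 (0:ℂ), HasSum (fun n => kS n * z ^ n) (SS z) := by
    have hball : ∀ᶠ z in 𝓝 (0:ℂ), ‖z‖ < ε := by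
      filter_upwards [Metric.ball_mem_nhds (0:ℂ) hε] with z hz
      simpa [mem_ball, dist_zero_right] using hz
    filter_upwards [hball] with z hz
    have h1 : HasSum (fun n => z ^ n • p.coeff n) (F z) := by
      apply hFs; rwa [dist_zero_right]
    have h2 : HasSum (fun n => (-z) ^ n • p.coeff n) (F (-z)) := by
      apply hFs; rwa [dist_zero_right, norm_neg]
    have h4 := h1.sub h2
    have hfun : (fun n => z ^ n • p.coeff n - (-z) ^ n • p.coeff n)
        = fun n => kS n * z ^ n := by
      funext n
      simp only [smul_eq_mul, hkS]
      rw [show ((-z):ℂ) ^ n = (-1) ^ n * z ^ n by rw [← neg_one_mul, mul_pow]]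
      ring
    rw [hfun] at h4
    exact h4
  have hpS : HasFPowerSeriesAt SS (FormalMultilinearSeries.ofScalars ℂ kS) 0 :=
    hasFPowerSeriesAt_ofScalars hSsum
  -- the quotient functions
  set A : ℂ → ℂ := dslope GG 0 with hAdef
  set B : ℂ → ℂ := dslope SS 0 with hBdef
  have hA : HasFPowerSeriesAt A (FormalMultilinearSeries.ofScalars ℂ kG).fslope 0 :=
    hpG.has_fpower_series_dslope_fslope
  have hB : HasFPowerSeriesAt B (FormalMultilinearSeries.ofScalars ℂ kS).fslope 0 :=
    hpS.has_fpower_series_dslope_fslope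
  have hkG1 : kG 1 = 1 := by
    simp only [hkG, pow_one, hp1, one_mul]
    exact div_self hQ
  have hkS1 : kS 1 = 2 := by
    simp only [hkS]
    rw [hp1]
    norm_num
  have hkS2 : kS 2 = 0 := by
    simp only [hkS]
    norm_num
  have hA0 : A 0 = 1 := by
    have h := hA.coeff_zero 1
    have : (FormalMultilinearSeries.ofScalars ℂ kG).fslope.coeff 0 = A 0 := h
    rw [← this, FormalMultilinearSeries.coeff_fslope, ofScalars_coeff', hkG1]
  have hB0 : B 0 = 2 := by
    have h := hB.coeff_zero 1
    have : (FormalMultilinearSeries.ofScalars ℂ kS).fslope.coeff 0 = B 0 := h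
    rw [← this, FormalMultilinearSeries.coeff_fslope, ofScalars_coeff', hkS1]
  have hA' : HasDerivAt A (kG 2) 0 := by
    have h := hA.hasDerivAt
    have hv : ((FormalMultilinearSeries.ofScalars ℂ kG).fslope 1 fun _ => 1) = kG 2 := by
      have : ((FormalMultilinearSeries.ofScalars ℂ kG).fslope 1 fun _ => 1)
          = (FormalMultilinearSeries.ofScalars ℂ kG).fslope.coeff 1 := rfl
      rw [this, FormalMultilinearSeries.coeff_fslope, ofScalars_coeff']
    rwa [hv] at h
  have hB' : HasDerivAt B (0:ℂ) 0 := by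
    have h := hB.hasDerivAt
    have hv : ((FormalMultilinearSeries.ofScalars ℂ kS).fslope 1 fun _ => 1) = 0 := by
      have : ((FormalMultilinearSeries.ofScalars ℂ kS).fslope 1 fun _ => 1)
          = (FormalMultilinearSeries.ofScalars ℂ kS).fslope.coeff 1 := rfl
      rw [this, FormalMultilinearSeries.coeff_fslope, ofScalars_coeff', hkS2]
    rwa [hv] at h
  -- the function H
  set H : ℂ → ℂ := fun z => A z ^ (lam:ℂ) * (2 / B z) with hHdef
  have hGG0 : GG 0 = 0 := by simp [hGG]
  have hSS0 : SS 0 = 0 := by simp [hSS]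
  -- H agrees with φ ∘ u off 0
  have hHu : ∀ᶠ z in 𝓝[≠] (0:ℂ), H z = φ (u z) := by
    rw [eventually_nhdsWithin_iff]
    filter_upwards [Metric.ball_mem_nhds (0:ℂ) one_pos] with z hz hz0
    have hz0' : z ≠ 0 := by simpa using hz0
    have hAz : A z = GG z / z := by
      rw [hAdef, dslope_of_ne _ hz0', slope_def_field, hGG0, sub_zero, sub_zero]
    have hBz : B z = SS z / z := by
      rw [hBdef, dslope_of_ne _ hz0', slope_def_field, hSS0, sub_zero, sub_zero]
    have hDq : Dq q F z = GG z / z := by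
      rw [Dq, if_neg hz0', hGG, div_div]
    have key : H z = 2 * z * Dq q F z ^ (lam:ℂ) / SS z := by
      simp only [hHdef]
      rw [hDq, hAz, hBz]
      rcases eq_or_ne (SS z) 0 with h | h
      · simp [h, zero_div, div_zero, mul_zero]
      · field_simp
    rw [key, hSS]
    exact hsub z hz hz0'
  -- analyticity of H and φ ∘ u at 0
  have hAa : AnalyticAt ℂ A 0 := hA.analyticAt
  have hBa : AnalyticAt ℂ B 0 := hB.analyticAt
  have hcpa : AnalyticAt ℂ (fun z => A z ^ (lam:ℂ)) 0 :=
    hAa.cpow analyticAt_const (by rw [hA0]; exact Complex.one_mem_slitPlane)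
  have hdiva : AnalyticAt ℂ (fun z => 2 / B z) 0 :=
    analyticAt_const.div hBa (by rw [hB0]; norm_num)
  have hHa : AnalyticAt ℂ H 0 := hcpa.mul hdiva
  have hu0 : u 0 = 0 := hu.2.1
  have hua : AnalyticAt ℂ u 0 := hu.1 0 (mem_ball_self one_pos)
  have hφua : AnalyticAt ℂ (fun z => φ (u z)) 0 := by
    have : AnalyticAt ℂ φ (u 0) := by rw [hu0]; exact hφa
    exact this.comp hua
  -- H =ᶠ φ ∘ u near 0
  have heq : H =ᶠ[𝓝 (0:ℂ)] fun z => φ (u z) :=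
    eventuallyEq_of_punctured hHa.continuousAt hφua.continuousAt hHu
  have hder := heq.deriv_eq
  -- compute deriv H 0
  have hcp' : HasDerivAt (fun z => A z ^ (lam:ℂ))
      ((lam:ℂ) * A 0 ^ ((lam:ℂ) - 1) * kG 2) 0 :=
    hA'.cpow_const (by rw [hA0]; exact Complex.one_mem_slitPlane)
  have hdiv' : HasDerivAt (fun z => 2 / B z) ((0 * B 0 - 2 * 0) / B 0 ^ 2) 0 :=
    (hasDerivAt_const 0 (2:ℂ)).div hB' (by rw [hB0]; norm_num)
  have hH' : HasDerivAt H
      ((lam:ℂ) * A 0 ^ ((lam:ℂ) - 1) * kG 2 * (2 / B 0)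
        + A 0 ^ (lam:ℂ) * ((0 * B 0 - 2 * 0) / B 0 ^ 2)) 0 := hcp'.mul hdiv'
  have hderH : deriv H 0 = (lam:ℂ) * kG 2 := by
    rw [hH'.deriv, hA0, hB0]
    rw [one_cpow]
    norm_num
  -- compute deriv (φ ∘ u) 0
  have hφd : DifferentiableAt ℂ φ (u 0) := by rw [hu0]; exact hφa.differentiableAt
  have hud : DifferentiableAt ℂ u 0 := hua.differentiableAt
  have hderφu : deriv (fun z => φ (u z)) 0 = deriv φ 0 * deriv u 0 := by
    have h := deriv_comp (x := 0) hφd hud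
    rw [hu0] at h
    exact h
  -- conclude
  have hkG2 : (lam:ℂ) * kG 2 = (lam:ℂ) * ((symQ q 2 : ℝ) : ℂ) * p.coeff 2 := by
    rw [symQ_two_eq q hq0, hkG]
    ring
  rw [← hkG2, ← hderH, hder, hderφu]

lemma schwarz_deriv (u : ℂ → ℂ) (hu : IsSchwarz u) (c : ℕ → ℂ)
    (hc : ∀ z ∈ ball (0:ℂ) 1, (1 + u z) / (1 - u z) = ∑' n, c n * z ^ n) :
    c 1 = 2 * deriv u 0 := by
  have hua : AnalyticAt ℂ u 0 := hu.1 0 (mem_ball_self one_pos)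
  have hu0 : u 0 = 0 := hu.2.1
  have hP : HasFPowerSeriesAt (fun z => (1 + u z) / (1 - u z))
      (FormalMultilinearSeries.ofScalars ℂ c) 0 := by
    apply hasFPowerSeriesAt_ofScalars
    filter_upwards [Metric.ball_mem_nhds (0:ℂ) one_pos] with z hz
    apply hasSum_of_eq_tsum (hc z hz)
    have hn : ‖u z‖ < 1 := by simpa [mem_ball, dist_zero_right] using hu.2.2 z hz
    have h1 : 1 + u z ≠ 0 := by
      intro h
      have h' : u z = -1 := by linear_combination h
      rw [h'] at hn; norm_num at hn
    have h2 : 1 - u z ≠ 0 := by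
      intro h
      have h' : u z = 1 := by linear_combination -h
      rw [h'] at hn; norm_num at hn
    exact div_ne_zero h1 h2
  have hd1 : deriv (fun z => (1 + u z) / (1 - u z)) 0 = c 1 := by
    have h := hP.deriv
    exact h.trans (ofScalars_coeff' c 1)
  have hu' : HasDerivAt u (deriv u 0) 0 := hua.differentiableAt.hasDerivAt
  have hP' : HasDerivAt (fun z => (1 + u z) / (1 - u z))
      (((0 + deriv u 0) * (1 - u 0) - (1 + u 0) * (0 - deriv u 0)) / (1 - u 0) ^ 2) 0 :=
    ((hasDerivAt_const 0 (1:ℂ)).add hu').div ((hasDerivAt_const 0 (1:ℂ)).sub hu')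
      (by rw [hu0]; norm_num)
  rw [← hd1, hP'.deriv, hu0]
  ring

set_option maxRecDepth 8000 in
theorem coeff_a2_eq
    (q : ℝ) (hq0 : 0 < q) (hq1 : q < 1)
    (f g : ℂ → ℂ) (a : ℕ → ℂ)
    (hf : AnalyticOnNhd ℂ f (ball 0 1)) (hf0 : f 0 = 0) (hf'0 : deriv f 0 = 1)
    (hfa : ∀ z ∈ ball (0 : ℂ) 1, f z = ∑' n, a n * z ^ n)
    (ha0 : a 0 = 0) (ha1 : a 1 = 1)
    (hfinj : InjOn f (ball 0 1))
    (hg : AnalyticOnNhd ℂ g (ball 0 1)) (hg0 : g 0 = 0)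
    (hginj : InjOn g (ball 0 1))
    (hgf : ∀ᶠ z in nhds (0 : ℂ), g (f z) = z)
    (φ : ℂ → ℂ) (E : ℕ → ℂ) (E1 : ℝ)
    (hφa : AnalyticOnNhd ℂ φ (ball 0 1)) (hφ0 : φ 0 = 1)
    (hφre : ∀ z ∈ ball (0 : ℂ) 1, 0 < (φ z).re)
    (hφE : ∀ z ∈ ball (0 : ℂ) 1, φ z = ∑' n, E n * z ^ n)
    (hE0 : E 0 = 1) (hE1 : E 1 = (E1 : ℂ)) (hE1pos : 0 < E1)
    (lam : ℝ) (hlam : 1 ≤ lam)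
    (u v : ℂ → ℂ) (hu : IsSchwarz u) (hv : IsSchwarz v)
    (hsubf : ∀ z ∈ ball (0 : ℂ) 1, z ≠ 0 →
      2 * z * Dq q f z ^ (lam : ℂ) / (f z - f (-z)) = φ (u z))
    (hsubg : ∀ w ∈ ball (0 : ℂ) 1, w ≠ 0 →
      2 * w * Dq q g w ^ (lam : ℂ) / (g w - g (-w)) = φ (v w))
    (c d : ℕ → ℂ) (hc0 : c 0 = 1) (hd0 : d 0 = 1)
    (hc : ∀ z ∈ ball (0 : ℂ) 1, (1 + u z) / (1 - u z) = ∑' n, c n * z ^ n)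
    (hd : ∀ w ∈ ball (0 : ℂ) 1, (1 + v w) / (1 - v w) = ∑' n, d n * w ^ n)
    :
    d 1 = -c 1 ∧ a 2 = (E1 : ℂ) * c 1 / (2 * (lam : ℂ) * (symQ q 2 : ℂ)) := by
  have h01 : (0:ℂ) ∈ ball (0:ℂ) 1 := mem_ball_self one_pos
  have hqR : q ≠ q⁻¹ := by
    have h1 : (1:ℝ) < q⁻¹ := (one_lt_inv₀ hq0).mpr hq1
    intro h; rw [h] at hq1; linarith
  have hQ : (q:ℂ) - (q:ℂ)⁻¹ ≠ 0 := by
    rw [← Complex.ofReal_inv, ← Complex.ofReal_sub]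
    exact Complex.ofReal_ne_zero.mpr (sub_ne_zero.mpr hqR)
  -- power series of f
  have hpf : HasFPowerSeriesAt f (FormalMultilinearSeries.ofScalars ℂ a) 0 := by
    apply hasFPowerSeriesAt_ofScalars
    filter_upwards [Metric.ball_mem_nhds (0:ℂ) one_pos] with z hz
    rcases eq_or_ne z 0 with rfl | hz0
    · simpa [hf0, ha0] using hasSum_zero_pt a
    · apply hasSum_of_eq_tsum (hfa z hz)
      intro h0
      exact hz0 (hfinj hz h01 (by rw [h0, hf0]))
  have hafc : (FormalMultilinearSeries.ofScalars ℂ a).coeff 1 = 1 := by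
    rw [ofScalars_coeff', ha1]
  -- power series of φ
  have hpφ : HasFPowerSeriesAt φ (FormalMultilinearSeries.ofScalars ℂ E) 0 := by
    apply hasFPowerSeriesAt_ofScalars
    filter_upwards [Metric.ball_mem_nhds (0:ℂ) one_pos] with z hz
    apply hasSum_of_eq_tsum (hφE z hz)
    intro h0
    have h' := hφre z hz
    rw [h0] at h'
    simp at h'
  have hderφ : deriv φ 0 = (E1:ℂ) := by
    have h := hpφ.deriv
    have h2 : deriv φ 0 = (FormalMultilinearSeries.ofScalars ℂ E).coeff 1 := h
    rw [h2, ofScalars_coeff', hE1]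
  -- the power series of g and its coefficients
  obtain ⟨pg, hpg⟩ := hg 0 h01
  have hDa : HasFPowerSeriesAt (dslope f 0) (FormalMultilinearSeries.ofScalars ℂ a).fslope 0 :=
    hpf.has_fpower_series_dslope_fslope
  have hDb : HasFPowerSeriesAt (dslope g 0) pg.fslope 0 :=
    hpg.has_fpower_series_dslope_fslope
  have hDa0 : dslope f 0 0 = 1 := by
    have h := hDa.coeff_zero 1
    have h2 : (FormalMultilinearSeries.ofScalars ℂ a).fslope.coeff 0 = dslope f 0 0 := h
    rw [← h2, FormalMultilinearSeries.coeff_fslope, ofScalars_coeff', ha1]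
  have hDa' : HasDerivAt (dslope f 0) (a 2) 0 := by
    have h := hDa.hasDerivAt
    have hv2 : ((FormalMultilinearSeries.ofScalars ℂ a).fslope 1 fun _ => 1) = a 2 := by
      have h3 : ((FormalMultilinearSeries.ofScalars ℂ a).fslope 1 fun _ => 1)
          = (FormalMultilinearSeries.ofScalars ℂ a).fslope.coeff 1 := rfl
      rw [h3, FormalMultilinearSeries.coeff_fslope, ofScalars_coeff']
    rwa [hv2] at h
  have hDb' : HasDerivAt (dslope g 0) (pg.fslope.coeff 1) 0 := hDb.hasDerivAt
  have hpunct : ∀ᶠ z in 𝓝[≠] (0:ℂ), dslope g 0 (f z) = 1 / dslope f 0 z := by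
    rw [eventually_nhdsWithin_iff]
    filter_upwards [hgf] with z hz hz0
    have hz0' : z ≠ 0 := by simpa using hz0
    have hfz : f z ≠ 0 := by
      intro h
      apply hz0'
      rw [h, hg0] at hz
      exact hz.symm
    rw [dslope_of_ne _ hfz, slope_def_field, hz, hg0, sub_zero, sub_zero,
        dslope_of_ne _ hz0', slope_def_field, hf0, sub_zero, sub_zero, one_div_div]
  have hcontL : ContinuousAt (fun z => dslope g 0 (f z)) 0 := by
    have h1 : ContinuousAt (dslope g 0) (f 0) := by
      rw [hf0]; exact hDb.analyticAt.continuousAt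
    exact h1.comp (hf 0 h01).continuousAt
  have hcontR : ContinuousAt (fun z => 1 / dslope f 0 z) 0 :=
    continuousAt_const.div hDa.analyticAt.continuousAt (by rw [hDa0]; norm_num)
  have heq2 : (fun z => dslope g 0 (f z)) =ᶠ[𝓝 (0:ℂ)] fun z => 1 / dslope f 0 z :=
    eventuallyEq_of_punctured hcontL hcontR hpunct
  have hb1 : pg.coeff 1 = 1 := by
    have h0 := heq2.eq_of_nhds
    simp only [hf0] at h0
    rw [hDa0] at h0
    have h2 : pg.fslope.coeff 0 = dslope g 0 0 := hDb.coeff_zero 1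
    rw [← FormalMultilinearSeries.coeff_fslope, h2, h0]
    norm_num
  have hb2 : pg.fslope.coeff 1 = - a 2 := by
    have hder2 := heq2.deriv_eq
    have hfd : DifferentiableAt ℂ f 0 := (hf 0 h01).differentiableAt
    have hDbd : DifferentiableAt ℂ (dslope g 0) (f 0) := by
      rw [hf0]; exact hDb.analyticAt.differentiableAt
    have hL : deriv (fun z => dslope g 0 (f z)) 0 = pg.fslope.coeff 1 := by
      have h := deriv_comp (x := 0) hDbd hfd
      rw [hf0, hf'0] at h
      have hderDb : deriv (dslope g 0) 0 = pg.fslope.coeff 1 := hDb'.deriv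
      rw [show (fun z => dslope g 0 (f z)) = dslope g 0 ∘ f from rfl, h, hderDb, mul_one]
    have hR : deriv (fun z => 1 / dslope f 0 z) 0 = - a 2 := by
      have h' : HasDerivAt (fun z => 1 / dslope f 0 z)
          ((0 * dslope f 0 0 - 1 * a 2) / dslope f 0 0 ^ 2) 0 :=
        (hasDerivAt_const 0 (1:ℂ)).div hDa' (by rw [hDa0]; norm_num)
      rw [h'.deriv, hDa0]
      ring
    rw [← hL, hder2, hR]
  -- apply the main computation to f and g
  have hφa0 : AnalyticAt ℂ φ 0 := hφa 0 h01
  have eqf := main_step q hq0 hq1 f _ hpf hafc φ u hφa0 hu lam hsubf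
  have eqg := main_step q hq0 hq1 g pg hpg hb1 φ v hφa0 hv lam hsubg
  rw [ofScalars_coeff'] at eqf
  rw [show pg.coeff 2 = - a 2 by
    rw [← FormalMultilinearSeries.coeff_fslope, hb2]] at eqg
  have hduc : deriv u 0 = c 1 / 2 := by
    have h := schwarz_deriv u hu c hc
    rw [h]; ring
  have hdvd : deriv v 0 = d 1 / 2 := by
    have h := schwarz_deriv v hv d hd
    rw [h]; ring
  rw [hderφ, hduc] at eqf
  rw [hderφ, hdvd] at eqg
  -- nonvanishing facts
  have hE1ne : ((E1:ℝ):ℂ) ≠ 0 := by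
    exact Complex.ofReal_ne_zero.mpr hE1pos.ne'
  have hlamne : ((lam:ℝ):ℂ) ≠ 0 := Complex.ofReal_ne_zero.mpr (by linarith)
  have hinv : (1:ℝ) < q⁻¹ := (one_lt_inv₀ hq0).mpr hq1
  have hsymne : ((symQ q 2 : ℝ):ℂ) ≠ 0 := by
    rw [symQ_two_eq q hq0]
    apply div_ne_zero _ hQ
    rw [← Complex.ofReal_pow, ← Complex.ofReal_inv, ← Complex.ofReal_pow,
      ← Complex.ofReal_sub]
    exact Complex.ofReal_ne_zero.mpr (by nlinarith)
  constructor
  · have hsum : (E1:ℂ) * (c 1 / 2) + (E1:ℂ) * (d 1 / 2) = 0 := by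
      rw [← eqf, ← eqg]; ring
    have h2 : (E1:ℂ) * ((c 1 + d 1) / 2) = 0 := by linear_combination hsum
    have h3 := (mul_eq_zero.mp h2).resolve_left hE1ne
    linear_combination 2 * h3
  · rw [eq_div_iff (mul_ne_zero (mul_ne_zero two_ne_zero hlamne) hsymne)]
    linear_combination 2 * eqf
end

section
/- Let μ ≥ 0 and λ ≥ 1 be real and let f belong to the class S*_{Σ,q}^η(μ,λ;φ). Then d₁ = −c₁ and λ·M₂·[2]_q·L₂·a₂ = (1/2)·E₁·c₁. -/
open Complex Metric Set

noncomputable def taylorCoeff (h : ℂ → ℂ) (n : ℕ) : ℂ := iteratedDeriv n h 0 / (n.factorial : ℂ)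

noncomputable def Lcoef (q η : ℝ) (n : ℕ) : ℝ := symQ q (1 + η) / symQ q ((n : ℝ) + η)

noncomputable def Jop (q η : ℝ) (h : ℂ → ℂ) (z : ℂ) : ℂ :=
  ∑' n, (Lcoef q η n : ℂ) * taylorCoeff h n * z ^ n

noncomputable def Phi (q η lam mu : ℝ) (h : ℂ → ℂ) (z : ℂ) : ℂ :=
  (2 * z * Dq q (Jop q η h) z ^ (lam : ℂ) / (Jop q η h z - Jop q η h (-z))) ^ (mu : ℂ) *
    (2 * Dq q (fun ζ => ζ * Dq q (Jop q η h) ζ) z ^ (lam : ℂ) /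
        Dq q (fun ζ => Jop q η h ζ - Jop q η h (-ζ)) z) ^ ((1 - mu : ℝ) : ℂ)

noncomputable def M2v (q mu : ℝ) : ℝ := mu - (mu - 1) * symQ q 2
noncomputable def M3v (q mu : ℝ) : ℝ := mu - (mu - 1) * symQ q 3
noncomputable def N2v (q mu : ℝ) : ℝ := mu - (mu - 1) * symQ q 2 ^ 2

noncomputable def Omegav (q η lam mu : ℝ) : ℝ :=
  2 * (lam * symQ q 3 - 1) * M3v q mu * Lcoef q η 3 +
    lam * (lam * M2v q mu ^ 2 - N2v q mu) * symQ q 2 ^ 2 * Lcoef q η 2 ^ 2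

noncomputable def Thetav (q η lam mu E1 : ℝ) (E : ℕ → ℂ) : ℂ :=
  ((2 * (lam * symQ q 3 - 1) * M3v q mu * E1 ^ 2 * Lcoef q η 3 : ℝ) : ℂ) +
    (lam : ℂ) * (((lam * M2v q mu ^ 2 : ℝ) : ℂ) * (((E1 ^ 2 + 2 * E1 : ℝ) : ℂ) - 2 * E 2) -
        ((N2v q mu * E1 ^ 2 : ℝ) : ℂ)) * ((symQ q 2 ^ 2 * Lcoef q η 2 ^ 2 : ℝ) : ℂ)

noncomputable def Gammav (q η lam : ℝ) : ℝ :=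
  2 * (lam * symQ q 3 - 1) * Lcoef q η 3 + lam * (lam - 1) * symQ q 2 ^ 2 * Lcoef q η 2 ^ 2

noncomputable def Xiv (q η lam E1 : ℝ) (E : ℕ → ℂ) : ℂ :=
  ((2 * (lam * symQ q 3 - 1) * E1 ^ 2 * Lcoef q η 3 : ℝ) : ℂ) +
    (lam : ℂ) * ((((lam - 1) * E1 ^ 2 : ℝ) : ℂ) + 2 * (lam : ℂ) * ((E1 : ℂ) - E 2)) *
      ((symQ q 2 ^ 2 * Lcoef q η 2 ^ 2 : ℝ) : ℂ)

noncomputable def Psiv (q η lam : ℝ) : ℝ :=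
  2 * (lam * symQ q 3 - 1) * symQ q 3 * Lcoef q η 3 +
    lam * (lam - 1) * symQ q 2 ^ 4 * Lcoef q η 2 ^ 2

noncomputable def Upsv (q η lam E1 : ℝ) (E : ℕ → ℂ) : ℂ :=
  ((2 * (lam * symQ q 3 - 1) * symQ q 3 * E1 ^ 2 * Lcoef q η 3 : ℝ) : ℂ) +
    (lam : ℂ) * ((((lam - 1) * E1 ^ 2 : ℝ) : ℂ) + 2 * (lam : ℂ) * ((E1 : ℂ) - E 2)) *
      ((symQ q 2 ^ 4 * Lcoef q η 2 ^ 2 : ℝ) : ℂ)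


open FormalMultilinearSeries

lemma symQ_eq (q x : ℝ) : symQ q x = (q ^ x - q ^ (-x)) / (q - q⁻¹) := rfl

section symQ
variable {q : ℝ} (hq0 : 0 < q) (hq1 : q < 1)

lemma q_sub_inv_neg (hq0 : 0 < q) (hq1 : q < 1) : q - q⁻¹ < 0 := by
  have h1 : 1 < q⁻¹ := by
    have := mul_inv_cancel₀ (ne_of_gt hq0)
    nlinarith [inv_pos.mpr hq0]
  linarith

include hq0 hq1 in
lemma symQ_mono {x y : ℝ} (hxy : x ≤ y) : symQ q x ≤ symQ q y := by
  have hd := q_sub_inv_neg hq0 hq1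
  have h1 : Real.rpow q y ≤ Real.rpow q x :=
    Real.rpow_le_rpow_of_exponent_ge hq0 hq1.le hxy
  have h2 : Real.rpow q (-x) ≤ Real.rpow q (-y) :=
    Real.rpow_le_rpow_of_exponent_ge hq0 hq1.le (neg_le_neg hxy)
  have hnum : Real.rpow q y - Real.rpow q (-y) ≤ Real.rpow q x - Real.rpow q (-x) := by
    linarith
  rw [symQ, symQ, div_eq_mul_inv, div_eq_mul_inv]
  exact mul_le_mul_of_nonpos_right hnum (inv_nonpos.mpr hd.le)

include hq0 hq1 in
lemma symQ_pos {x : ℝ} (hx : 0 < x) : 0 < symQ q x := by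
  have hd := q_sub_inv_neg hq0 hq1
  have : Real.rpow q x < Real.rpow q (-x) :=
    Real.rpow_lt_rpow_of_exponent_gt hq0 hq1 (by linarith)
  rw [symQ]
  exact div_pos_iff.mpr (Or.inr ⟨by linarith, hd⟩)

lemma symQ_zero : symQ q 0 = 0 := by simp [symQ]

include hq0 hq1 in
lemma symQ_nonneg {x : ℝ} (hx : 0 ≤ x) : 0 ≤ symQ q x := by
  have := symQ_mono hq0 hq1 hx
  rwa [symQ_zero] at this

include hq0 in
lemma symQ_nat (m : ℕ) : symQ q (m : ℝ) = (q ^ m - (q ^ m)⁻¹) / (q - q⁻¹) := by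
  rw [symQ_eq, Real.rpow_neg hq0.le, Real.rpow_natCast]

include hq0 hq1 in
lemma symQ_one : symQ q 1 = 1 := by
  have hd := q_sub_inv_neg hq0 hq1
  have : ((1:ℕ):ℝ) = (1:ℝ) := by norm_num
  rw [← this, symQ_nat hq0, pow_one, Nat.cast_one]
  exact div_self (ne_of_lt hd)

include hq0 hq1 in
lemma symQ_nat_le (m : ℕ) : symQ q (m : ℝ) ≤ (q⁻¹ - q)⁻¹ * (q⁻¹) ^ m := by
  have hd := q_sub_inv_neg hq0 hq1
  have hd' : 0 < q⁻¹ - q := by linarith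
  rw [symQ_nat hq0]
  have : (q ^ m - (q ^ m)⁻¹) / (q - q⁻¹) = ((q ^ m)⁻¹ - q ^ m) / (q⁻¹ - q) := by
    rw [← neg_div_neg_eq]; ring_nf
  rw [this]
  have h1 : ((q ^ m)⁻¹ - q ^ m) / (q⁻¹ - q) ≤ (q ^ m)⁻¹ / (q⁻¹ - q) := by
    gcongr
    exact sub_le_self _ (by positivity)
  refine h1.trans (le_of_eq ?_)
  rw [inv_pow, div_eq_mul_inv, mul_comm]

include hq0 hq1 in
lemma symQ_keyC (m : ℕ) (z : ℂ) :
    ((q:ℂ) * z) ^ m - (z / (q:ℂ)) ^ m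
      = ((q:ℂ) - (q:ℂ)⁻¹) * ((symQ q (m:ℝ) : ℝ) : ℂ) * z ^ m := by
  have hd := q_sub_inv_neg hq0 hq1
  have hreal : (q - q⁻¹) * symQ q (m:ℝ) = q ^ m - (q ^ m)⁻¹ := by
    rw [symQ_nat hq0, mul_div_cancel₀ _ (ne_of_lt hd)]
  have hC : ((q:ℂ) - (q:ℂ)⁻¹) * ((symQ q (m:ℝ) : ℝ) : ℂ) = (q:ℂ) ^ m - ((q:ℂ) ^ m)⁻¹ := by
    have := congrArg (Complex.ofReal) hreal
    push_cast at this
    exact this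
  have hqC : (q:ℂ) ≠ 0 := by exact_mod_cast ne_of_gt hq0
  rw [hC, mul_pow, div_pow]
  rw [div_eq_mul_inv]
  ring

end symQ


lemma hasSum_taylorCoeff {F : ℂ → ℂ} (hF : DifferentiableOn ℂ F (ball 0 1)) {z : ℂ}
    (hz : z ∈ ball (0:ℂ) 1) : HasSum (fun n => taylorCoeff F n * z ^ n) (F z) := by
  have h := Complex.hasSum_taylorSeries_on_ball hF hz
  simp only [sub_zero] at h
  have hfun : (fun n => taylorCoeff F n * z ^ n)
      = (fun n => ((n.factorial : ℂ))⁻¹ • z ^ n • iteratedDeriv n F 0) := by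
    funext n
    rw [taylorCoeff, smul_eq_mul, smul_eq_mul]
    ring
  rw [hfun]
  exact h

lemma exists_norm_le_of_summable {f : ℕ → ℂ} (h : Summable f) :
    ∃ C : ℝ, 0 ≤ C ∧ ∀ n, ‖f n‖ ≤ C := by
  have ht : Filter.Tendsto (fun n => ‖f n‖) Filter.atTop (nhds 0) := by
    simpa using h.tendsto_atTop_zero.norm
  obtain ⟨C, hC⟩ := ht.bddAbove_range
  exact ⟨C, le_trans (norm_nonneg (f 0)) (hC ⟨0, rfl⟩), fun n => hC ⟨n, rfl⟩⟩

lemma summable_norm_geom {b : ℕ → ℂ} {s s' : ℝ} (hs : 0 ≤ s) (hss : s < s')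
    (h : Summable fun n => b n * (s' : ℂ) ^ n) : Summable fun n => ‖b n‖ * s ^ n := by
  have hs' : 0 < s' := lt_of_le_of_lt hs hss
  obtain ⟨C, hC0, hC⟩ := exists_norm_le_of_summable h
  have hr : 0 ≤ s / s' := by positivity
  have hr1 : s / s' < 1 := (div_lt_one hs').mpr hss
  refine Summable.of_nonneg_of_le (fun n => by positivity) (fun n => ?_)
    ((summable_geometric_of_lt_one hr hr1).mul_left C)
  have hnorm : ‖b n * (s' : ℂ) ^ n‖ = ‖b n‖ * s' ^ n := by
    rw [norm_mul, norm_pow, Complex.norm_real, Real.norm_of_nonneg hs'.le]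
  have h1 : ‖b n‖ * s' ^ n ≤ C := hnorm ▸ hC n
  have : ‖b n‖ * s ^ n = (‖b n‖ * s' ^ n) * (s / s') ^ n := by
    rw [div_pow]
    field_simp
  rw [this]
  exact mul_le_mul_of_nonneg_right h1 (by positivity)

lemma hasFPS_of_hasSum {F : ℂ → ℂ} {b : ℕ → ℂ} {r : NNReal} (hr : 0 < r)
    (h : ∀ z : ℂ, ‖z‖ < (r:ℝ) → HasSum (fun n => b n * z ^ n) (F z)) :
    HasFPowerSeriesOnBall F (FormalMultilinearSeries.ofScalars ℂ b) 0 r := by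
  constructor
  · refine ENNReal.le_of_forall_nnreal_lt (fun s hs => ?_)
    have hs' : (s : ℝ) < (r : ℝ) := by exact_mod_cast hs
    have hns : ‖(((s:ℝ)) : ℂ)‖ = (s:ℝ) := by
      rw [Complex.norm_real]; exact Real.norm_of_nonneg s.2
    have hsum : Summable fun n => b n * ((s : ℝ) : ℂ) ^ n :=
      (h ((s:ℝ):ℂ) (by rw [hns]; exact hs')).summable
    obtain ⟨C, hC0, hC⟩ := exists_norm_le_of_summable hsum
    refine le_radius_of_bound _ C (fun n => ?_)
    have : ‖b n * ((s:ℝ):ℂ) ^ n‖ = ‖b n‖ * (s:ℝ) ^ n := by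
      rw [norm_mul, norm_pow, hns]
    rw [ofScalars_norm]
    exact le_trans (le_of_eq (this.symm)) (hC n)
  · exact_mod_cast hr
  · intro y hy
    rw [mem_emetric_ball_zero_iff] at hy
    have hy' : ‖y‖ < (r : ℝ) := by exact_mod_cast hy
    simpa only [ofScalars_apply_eq, smul_eq_mul, zero_add] using h y hy'

lemma coeff_unique {F : ℂ → ℂ} {b b' : ℕ → ℂ} {r : NNReal} (hr : 0 < r)
    (h1 : ∀ z : ℂ, ‖z‖ < (r:ℝ) → HasSum (fun n => b n * z ^ n) (F z))
    (h2 : ∀ z : ℂ, ‖z‖ < (r:ℝ) → HasSum (fun n => b' n * z ^ n) (F z)) : b = b' :=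
  ofScalars_series_injective ℂ ℂ
    (((hasFPS_of_hasSum hr h1).hasFPowerSeriesAt).eq_formalMultilinearSeries
      ((hasFPS_of_hasSum hr h2).hasFPowerSeriesAt))

lemma sum_deriv_props {b : ℕ → ℂ} {r : ℝ} (hr : 0 < r)
    (hb : Summable fun n => ‖b n‖ * r ^ n) :
    (∀ z : ℂ, ‖z‖ < r → HasSum (fun n => b n * z ^ n) (∑' n, b n * z ^ n)) ∧
      (∑' n, b n * (0:ℂ) ^ n) = b 0 ∧
      HasDerivAt (fun z : ℂ => ∑' n, b n * z ^ n) (b 1) 0 := by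
  have hhs : ∀ z : ℂ, ‖z‖ < r → HasSum (fun n => b n * z ^ n) (∑' n, b n * z ^ n) := by
    intro z hz
    refine (Summable.of_norm_bounded hb (fun n => ?_)).hasSum
    rw [norm_mul, norm_pow]
    exact mul_le_mul_of_nonneg_left (pow_le_pow_left₀ (norm_nonneg z) hz.le n) (norm_nonneg _)
  refine ⟨hhs, ?_, ?_⟩
  · rw [tsum_eq_single 0 (fun n hn => by simp [zero_pow hn])]
    simp
  · have hfps := hasFPS_of_hasSum (r := r.toNNReal) (by simpa using hr)
      (fun z hz => hhs z (by rwa [Real.coe_toNNReal _ hr.le] at hz))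
    have hd := hfps.hasFPowerSeriesAt.hasDerivAt
    simpa only [ofScalars_apply_eq, smul_eq_mul, one_pow, mul_one] using hd

lemma coeffs_eq_taylor {F : ℂ → ℂ} {b : ℕ → ℂ} (hF : DifferentiableOn ℂ F (ball 0 1))
    (hb : ∀ z ∈ ball (0:ℂ) 1, F z = ∑' n, b n * z ^ n)
    (hne : ∀ t : ℝ, 0 < t → t < 1 → F ((t:ℝ):ℂ) ≠ 0) :
    b = fun n => taylorCoeff F n := by
  have hsummable : ∀ t : ℝ, 0 < t → t < 1 → Summable fun n => b n * ((t:ℝ):ℂ) ^ n := by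
    intro t ht0 ht1
    by_contra hns
    have h0 : (∑' n, b n * ((t:ℝ):ℂ) ^ n) = 0 := tsum_eq_zero_of_not_summable hns
    have htb : ((t:ℝ):ℂ) ∈ ball (0:ℂ) 1 := by
      rw [mem_ball_zero_iff, Complex.norm_real, Real.norm_of_nonneg ht0.le]; exact ht1
    exact hne t ht0 ht1 ((hb _ htb).trans h0)
  have h1 : ∀ z : ℂ, ‖z‖ < ((1/2 : NNReal) : ℝ) → HasSum (fun n => b n * z ^ n) (F z) := by
    intro z hz
    have hz' : ‖z‖ < 1/2 := by simpa using hz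
    set t : ℝ := (‖z‖ + 1/2) / 2 with htdef
    have ht0 : 0 < t := by positivity
    have ht1 : t < 1 := by
      have := norm_nonneg z
      rw [htdef]; linarith
    have hzt : ‖z‖ < t := by rw [htdef]; linarith
    have hnormsum := summable_norm_geom (norm_nonneg z) hzt (hsummable t ht0 ht1)
    have hsum : Summable fun n => b n * z ^ n := by
      refine Summable.of_norm_bounded hnormsum (fun n => ?_)
      rw [norm_mul, norm_pow]
    have : F z = ∑' n, b n * z ^ n := hb z (by rw [mem_ball_zero_iff]; linarith)
    rw [this]
    exact hsum.hasSum
  have h2 : ∀ z : ℂ, ‖z‖ < ((1/2 : NNReal) : ℝ) →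
      HasSum (fun n => taylorCoeff F n * z ^ n) (F z) := by
    intro z hz
    have hz' : ‖z‖ < 1/2 := by simpa using hz
    exact hasSum_taylorCoeff hF (by rw [mem_ball_zero_iff]; linarith)
  exact coeff_unique (by norm_num) h1 h2

lemma summable_shifted {T' : ℕ → ℝ} {X : ℕ → ℝ} {K s : ℝ}
    (hX0 : ∀ n, 0 ≤ X n) (hs : Summable fun n => T' n * s ^ n)
    (hb : ∀ n, X n ≤ K * (T' (n + 1) * s ^ n)) (hs0 : 0 < s) : Summable X := by
  have h1 : Summable fun n => T' (n + 1) * s ^ (n + 1) :=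
    (_root_.summable_nat_add_iff 1).2 hs
  have h2 : Summable fun n => T' (n + 1) * s ^ n := by
    refine (h1.mul_left s⁻¹).congr (fun n => ?_)
    rw [pow_succ]
    field_simp
  exact Summable.of_nonneg_of_le hX0 hb (h2.mul_left K)

lemma pow_shift_eq {a b c : ℝ} (hab : a * b = c) (n : ℕ) :
    a ^ (n + 1) * b ^ n = a * c ^ n := by
  rw [pow_succ', mul_assoc, ← mul_pow, hab]

lemma master (q : ℝ) (hq0 : 0 < q) (hq1 : q < 1) (η : ℝ) (hη : -1 < η)
    (lam mu : ℝ)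
    (h : ℂ → ℂ) (hh : AnalyticOnNhd ℂ h (ball 0 1)) (hh0 : h 0 = 0) (hh1 : deriv h 0 = 1)
    (φ : ℂ → ℂ) (E : ℕ → ℂ) (E1 : ℝ)
    (hφa : AnalyticOnNhd ℂ φ (ball 0 1)) (hφ0 : φ 0 = 1)
    (hφre : ∀ z ∈ ball (0:ℂ) 1, 0 < (φ z).re)
    (hφE : ∀ z ∈ ball (0:ℂ) 1, φ z = ∑' n, E n * z ^ n)
    (hE1 : E 1 = (E1 : ℂ))
    (w : ℂ → ℂ) (hw : IsSchwarz w)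
    (hsub : ∀ z ∈ ball (0:ℂ) 1, z ≠ 0 → Phi q η lam mu h z = φ (w z))
    (c : ℕ → ℂ)
    (hc : ∀ z ∈ ball (0:ℂ) 1, (1 + w z) / (1 - w z) = ∑' n, c n * z ^ n) :
    (lam : ℂ) * ((M2v q mu : ℝ) : ℂ) * ((symQ q 2 : ℝ) : ℂ) * ((Lcoef q η 2 : ℝ) : ℂ) *
      taylorCoeff h 2 = 1 / 2 * (E1 : ℂ) * c 1 := by
  -- basic facts
  have hqC : (q:ℂ) ≠ 0 := by exact_mod_cast ne_of_gt hq0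
  have hdneg : q - q⁻¹ < 0 := q_sub_inv_neg hq0 hq1
  have hqinv : 1 < q⁻¹ := by nlinarith [mul_inv_cancel₀ (ne_of_gt hq0), inv_pos.mpr hq0]
  have hdC : ((q:ℂ) - (q:ℂ)⁻¹) ≠ 0 := by
    have h1 : (((q - q⁻¹ : ℝ)):ℂ) ≠ 0 := by exact_mod_cast ne_of_lt hdneg
    push_cast at h1
    exact h1
  -- Taylor coefficients of h
  have hT : ∀ z ∈ ball (0:ℂ) 1, HasSum (fun n => taylorCoeff h n * z ^ n) (h z) :=
    fun z hz => hasSum_taylorCoeff hh.differentiableOn hz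
  have hT0 : taylorCoeff h 0 = 0 := by
    simp [taylorCoeff, iteratedDeriv_zero, hh0]
  have hT1 : taylorCoeff h 1 = 1 := by
    simp [taylorCoeff, iteratedDeriv_one, hh1]
  -- L facts
  have hsym1η : 0 < symQ q (1 + η) := symQ_pos hq0 hq1 (by linarith)
  have hL1 : Lcoef q η 1 = 1 := by
    rw [Lcoef, Nat.cast_one]
    exact div_self (ne_of_gt hsym1η)
  have hLmem : ∀ n : ℕ, 1 ≤ n → 0 < Lcoef q η n ∧ Lcoef q η n ≤ 1 := by
    intro n hn
    have hmono : symQ q (1 + η) ≤ symQ q ((n:ℝ) + η) := by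
      apply symQ_mono hq0 hq1
      have : (1:ℝ) ≤ (n:ℝ) := by exact_mod_cast hn
      linarith
    rw [Lcoef]
    constructor
    · exact div_pos hsym1η (lt_of_lt_of_le hsym1η hmono)
    · rw [div_le_one (lt_of_lt_of_le hsym1η hmono)]
      exact hmono
  -- Jc
  set Jc : ℕ → ℂ := fun n => ((Lcoef q η n : ℝ) : ℂ) * taylorCoeff h n with hJcdef
  have hJop : ∀ z : ℂ, Jop q η h z = ∑' n, Jc n * z ^ n := fun z => rfl
  have hJc0 : Jc 0 = 0 := by rw [hJcdef]; simp [hT0]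
  have hJc1 : Jc 1 = 1 := by rw [hJcdef]; simp [hT1, hL1]
  have hJcle : ∀ n, ‖Jc n‖ ≤ ‖taylorCoeff h n‖ := by
    intro n
    rcases Nat.eq_zero_or_pos n with hn | hn
    · subst hn; rw [hJc0]; simp
    · rw [hJcdef]
      simp only [norm_mul, Complex.norm_real]
      have hL := hLmem n hn
      calc ‖Lcoef q η n‖ * ‖taylorCoeff h n‖ ≤ 1 * ‖taylorCoeff h n‖ := by
            apply mul_le_mul_of_nonneg_right _ (norm_nonneg _)
            rw [Real.norm_eq_abs, abs_of_pos hL.1]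
            exact hL.2
        _ = ‖taylorCoeff h n‖ := one_mul _
  -- summability
  have hTnorm : ∀ s : ℝ, 0 ≤ s → s < 1 → Summable fun n => ‖taylorCoeff h n‖ * s ^ n := by
    intro s hs0 hs1
    refine summable_norm_geom hs0 (s' := (s+1)/2) (by linarith) ?_
    refine (hT ((((s+1)/2 : ℝ)):ℂ) ?_).summable
    rw [mem_ball_zero_iff, Complex.norm_real, Real.norm_of_nonneg (by linarith)]
    linarith
  have hJcnorm : ∀ s : ℝ, 0 ≤ s → s < 1 → Summable fun n => ‖Jc n‖ * s ^ n := by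
    intro s hs0 hs1
    refine Summable.of_nonneg_of_le (fun n => by positivity) (fun n => ?_) (hTnorm s hs0 hs1)
    exact mul_le_mul_of_nonneg_right (hJcle n) (by positivity)
  -- sc
  set sc : ℕ → ℂ := fun m => ((symQ q (m:ℝ) : ℝ) : ℂ) with hscdef
  have hsc1 : sc 1 = 1 := by
    rw [hscdef]; simp only [Nat.cast_one]
    rw [symQ_one hq0 hq1]; norm_num
  have hscnorm : ∀ m : ℕ, ‖sc m‖ = symQ q (m:ℝ) := by
    intro m
    rw [hscdef]
    simp only [Complex.norm_real]
    exact Real.norm_of_nonneg (symQ_nonneg hq0 hq1 (by positivity))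
  have hscbound : ∀ m : ℕ, ‖sc m‖ ≤ (q⁻¹ - q)⁻¹ * (q⁻¹) ^ m := by
    intro m
    rw [hscnorm m]
    exact symQ_nat_le hq0 hq1 m
  -- coefficient sequences
  set Ac : ℕ → ℂ := fun n => Jc (n+1) * sc (n+1) with hAcdef
  set Bc : ℕ → ℂ := fun n => Jc (n+1) * (1 - (-1:ℂ)^(n+1)) with hBcdef
  set Cc : ℕ → ℂ := fun n => Jc (n+1) * sc (n+1)^2 with hCcdef
  set Dc : ℕ → ℂ := fun n => Jc (n+1) * sc (n+1) * (1 - (-1:ℂ)^(n+1)) with hDcdef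
  have hpm : ∀ k : ℕ, ‖(1 - (-1:ℂ)^k)‖ ≤ 2 := by
    intro k
    calc ‖(1 - (-1:ℂ)^k)‖ ≤ ‖(1:ℂ)‖ + ‖(-1:ℂ)^k‖ := norm_sub_le _ _
      _ = 2 := by norm_num
  -- radii
  have hr1pos : (0:ℝ) < q^2/2 := by positivity
  have hr1lt1 : q^2/2 < 1 := by nlinarith
  have hr0pos : (0:ℝ) < q^3/2 := by positivity
  have hr0ltr1 : q^3/2 < q^2/2 := by nlinarith
  have hq2ltq : q^2 < q := by
    rw [pow_two]
    calc q*q < 1*q := mul_lt_mul_of_pos_right hq1 hq0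
      _ = q := one_mul q
  -- summability of the four series at radius r1 = q^2/2
  have hAnorm : Summable fun n => ‖Ac n‖ * (q^2/2) ^ n := by
    refine summable_shifted (K := (q⁻¹-q)⁻¹ * q⁻¹) (fun n => by positivity)
      (hTnorm (q/2) (by positivity) (by nlinarith)) (fun n => ?_) (by positivity)
    have hps := pow_shift_eq (a := q⁻¹) (b := q^2/2) (c := q/2)
      (by field_simp) n
    have hb1 : ‖Ac n‖ ≤ ‖taylorCoeff h (n+1)‖ * ((q⁻¹-q)⁻¹ * (q⁻¹)^(n+1)) := by
      rw [hAcdef]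
      simp only [norm_mul]
      exact mul_le_mul (hJcle (n+1)) (hscbound (n+1)) (norm_nonneg _) (norm_nonneg _)
    calc ‖Ac n‖ * (q^2/2)^n
        ≤ (‖taylorCoeff h (n+1)‖ * ((q⁻¹-q)⁻¹ * (q⁻¹)^(n+1))) * (q^2/2)^n :=
          mul_le_mul_of_nonneg_right hb1 (by positivity)
      _ = ‖taylorCoeff h (n+1)‖ * (q⁻¹-q)⁻¹ * ((q⁻¹)^(n+1) * (q^2/2)^n) := by ring
      _ = (q⁻¹-q)⁻¹ * q⁻¹ * (‖taylorCoeff h (n+1)‖ * (q/2)^n) := by rw [hps]; ring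
  have hBnorm : Summable fun n => ‖Bc n‖ * (q^2/2) ^ n := by
    refine summable_shifted (K := 2) (fun n => by positivity)
      (hTnorm (q^2/2) hr1pos.le hr1lt1) (fun n => ?_) hr1pos
    have hb1 : ‖Bc n‖ ≤ ‖taylorCoeff h (n+1)‖ * 2 := by
      rw [hBcdef]
      simp only [norm_mul]
      exact mul_le_mul (hJcle (n+1)) (hpm (n+1)) (norm_nonneg _) (norm_nonneg _)
    calc ‖Bc n‖ * (q^2/2)^n ≤ (‖taylorCoeff h (n+1)‖ * 2) * (q^2/2)^n :=
          mul_le_mul_of_nonneg_right hb1 (by positivity)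
      _ = 2 * (‖taylorCoeff h (n+1)‖ * (q^2/2)^n) := by ring
  have hCnorm : Summable fun n => ‖Cc n‖ * (q^2/2) ^ n := by
    refine summable_shifted (K := ((q⁻¹-q)⁻¹)^2 * (q⁻¹)^2) (fun n => by positivity)
      (hTnorm (1/2) (by norm_num) (by norm_num)) (fun n => ?_) (by norm_num)
    have hps := pow_shift_eq (a := (q⁻¹)^2) (b := q^2/2) (c := (1/2:ℝ))
      (by field_simp) n
    have hb1 : ‖Cc n‖ ≤ ‖taylorCoeff h (n+1)‖ * ((q⁻¹-q)⁻¹ * (q⁻¹)^(n+1))^2 := by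
      rw [hCcdef]
      simp only [norm_mul, norm_pow]
      have h2 : ‖sc (n+1)‖^2 ≤ ((q⁻¹-q)⁻¹ * (q⁻¹)^(n+1))^2 :=
        pow_le_pow_left₀ (norm_nonneg _) (hscbound (n+1)) 2
      exact mul_le_mul (hJcle (n+1)) h2 (by positivity) (norm_nonneg _)
    calc ‖Cc n‖ * (q^2/2)^n
        ≤ (‖taylorCoeff h (n+1)‖ * ((q⁻¹-q)⁻¹ * (q⁻¹)^(n+1))^2) * (q^2/2)^n :=
          mul_le_mul_of_nonneg_right hb1 (by positivity)
      _ = ‖taylorCoeff h (n+1)‖ * ((q⁻¹-q)⁻¹)^2 * (((q⁻¹)^2)^(n+1) * (q^2/2)^n) := by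
          rw [mul_pow, ← pow_right_comm]
          ring
      _ = ((q⁻¹-q)⁻¹)^2 * (q⁻¹)^2 * (‖taylorCoeff h (n+1)‖ * (1/2:ℝ)^n) := by rw [hps]; ring
  have hDnorm : Summable fun n => ‖Dc n‖ * (q^2/2) ^ n := by
    refine summable_shifted (K := 2 * ((q⁻¹-q)⁻¹ * q⁻¹)) (fun n => by positivity)
      (hTnorm (q/2) (by positivity) (by nlinarith)) (fun n => ?_) (by positivity)
    have hps := pow_shift_eq (a := q⁻¹) (b := q^2/2) (c := q/2)
      (by field_simp) n
    have hb1 : ‖Dc n‖ ≤ (‖taylorCoeff h (n+1)‖ * ((q⁻¹-q)⁻¹ * (q⁻¹)^(n+1))) * 2 := by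
      rw [hDcdef]
      simp only [norm_mul]
      have hc0pos : 0 < (q⁻¹ - q)⁻¹ := inv_pos.mpr (by linarith)
      refine mul_le_mul ?_ (hpm (n+1)) (norm_nonneg _)
        (mul_nonneg (norm_nonneg _) (le_of_lt (mul_pos hc0pos (pow_pos (inv_pos.mpr hq0) _))))
      exact mul_le_mul (hJcle (n+1)) (hscbound (n+1)) (norm_nonneg _) (norm_nonneg _)
    calc ‖Dc n‖ * (q^2/2)^n
        ≤ ((‖taylorCoeff h (n+1)‖ * ((q⁻¹-q)⁻¹ * (q⁻¹)^(n+1))) * 2) * (q^2/2)^n :=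
          mul_le_mul_of_nonneg_right hb1 (by positivity)
      _ = 2 * (‖taylorCoeff h (n+1)‖ * (q⁻¹-q)⁻¹) * ((q⁻¹)^(n+1) * (q^2/2)^n) := by ring
      _ = 2 * ((q⁻¹-q)⁻¹ * q⁻¹) * (‖taylorCoeff h (n+1)‖ * (q/2)^n) := by rw [hps]; ring
  -- sum functions
  set SA : ℂ → ℂ := fun z => ∑' n, Ac n * z ^ n with hSAdef
  set SB : ℂ → ℂ := fun z => ∑' n, Bc n * z ^ n with hSBdef
  set SC : ℂ → ℂ := fun z => ∑' n, Cc n * z ^ n with hSCdef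
  set SD : ℂ → ℂ := fun z => ∑' n, Dc n * z ^ n with hSDdef
  have hSAs : ∀ z:ℂ, ‖z‖ < q^2/2 → HasSum (fun n => Ac n * z ^ n) (SA z) :=
    fun z hz => (sum_deriv_props hr1pos hAnorm).1 z hz
  have hSA0 : SA 0 = Ac 0 := (sum_deriv_props hr1pos hAnorm).2.1
  have hSAd : HasDerivAt SA (Ac 1) 0 := (sum_deriv_props hr1pos hAnorm).2.2
  have hSBs : ∀ z:ℂ, ‖z‖ < q^2/2 → HasSum (fun n => Bc n * z ^ n) (SB z) :=
    fun z hz => (sum_deriv_props hr1pos hBnorm).1 z hz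
  have hSB0 : SB 0 = Bc 0 := (sum_deriv_props hr1pos hBnorm).2.1
  have hSBd : HasDerivAt SB (Bc 1) 0 := (sum_deriv_props hr1pos hBnorm).2.2
  have hSCs : ∀ z:ℂ, ‖z‖ < q^2/2 → HasSum (fun n => Cc n * z ^ n) (SC z) :=
    fun z hz => (sum_deriv_props hr1pos hCnorm).1 z hz
  have hSC0 : SC 0 = Cc 0 := (sum_deriv_props hr1pos hCnorm).2.1
  have hSCd : HasDerivAt SC (Cc 1) 0 := (sum_deriv_props hr1pos hCnorm).2.2
  have hSDs : ∀ z:ℂ, ‖z‖ < q^2/2 → HasSum (fun n => Dc n * z ^ n) (SD z) :=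
    fun z hz => (sum_deriv_props hr1pos hDnorm).1 z hz
  have hSD0 : SD 0 = Dc 0 := (sum_deriv_props hr1pos hDnorm).2.1
  have hSDd : HasDerivAt SD (Dc 1) 0 := (sum_deriv_props hr1pos hDnorm).2.2
  -- J sums
  have hJhs : ∀ ζ:ℂ, ‖ζ‖ < 1 → HasSum (fun n => Jc n * ζ^n) (Jop q η h ζ) := by
    intro ζ hζ
    have hsm : Summable (fun n => Jc n * ζ^n) := by
      refine Summable.of_norm_bounded (hJcnorm ‖ζ‖ (norm_nonneg ζ) hζ) (fun n => ?_)
      rw [norm_mul, norm_pow]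
    rw [hJop]
    exact hsm.hasSum
  have hnormq : ∀ z:ℂ, ‖(q:ℂ) * z‖ = q * ‖z‖ := by
    intro z; rw [norm_mul, Complex.norm_real, Real.norm_of_nonneg hq0.le]
  have hnormdiv : ∀ z:ℂ, ‖z / (q:ℂ)‖ = ‖z‖ / q := by
    intro z; rw [norm_div, Complex.norm_real, Real.norm_of_nonneg hq0.le]
  -- claim 1
  have claim1 : ∀ z:ℂ, z ≠ 0 → ‖z‖ < q^2/2 → Dq q (Jop q η h) z = SA z := by
    intro z hz0 hzr
    have hn1 : ‖(q:ℂ)*z‖ < 1 := by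
      rw [hnormq]
      exact lt_of_le_of_lt (mul_le_of_le_one_left (norm_nonneg z) hq1.le)
        (lt_trans hzr hr1lt1)
    have hn2 : ‖z/(q:ℂ)‖ < 1 := by
      rw [hnormdiv, div_lt_one hq0]
      linarith
    have hs1 := (hJhs _ hn1).sub (hJhs _ hn2)
    have hmul := (hSAs z hzr).mul_left (((q:ℂ) - (q:ℂ)⁻¹) * z)
    have hfe : (fun n => ((q:ℂ)-(q:ℂ)⁻¹) * z * (Ac n * z^n))
        = (fun n => Jc (n+1) * ((q:ℂ)*z)^(n+1) - Jc (n+1) * (z/(q:ℂ))^(n+1)) := by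
      funext n
      rw [← mul_sub, symQ_keyC hq0 hq1 (n+1) z]
      simp only [hAcdef, hscdef]
      rw [pow_succ]
      ring
    rw [hfe] at hmul
    have hmul2 := (hasSum_nat_add_iff
      (f := fun n => Jc n * ((q:ℂ)*z)^n - Jc n * (z/(q:ℂ))^n) 1).mp hmul
    rw [show (∑ i ∈ Finset.range 1, (Jc i * ((q:ℂ)*z)^i - Jc i * (z/(q:ℂ))^i)) = 0 by
      simp [hJc0], add_zero] at hmul2
    have huniq := hs1.unique hmul2
    rw [Dq, if_neg hz0, huniq]
    exact mul_div_cancel_left₀ _ (mul_ne_zero hdC hz0)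
  -- claim 2
  have claim2 : ∀ z:ℂ, ‖z‖ < q^2/2 → Jop q η h z - Jop q η h (-z) = z * SB z := by
    intro z hzr
    have hz1 : ‖z‖ < 1 := lt_trans hzr hr1lt1
    have hz1' : ‖-z‖ < 1 := by rwa [norm_neg]
    have hs1 := (hJhs z hz1).sub (hJhs _ hz1')
    have hmul := (hSBs z hzr).mul_left z
    have hfe : (fun n => z * (Bc n * z^n))
        = (fun n => Jc (n+1) * z^(n+1) - Jc (n+1) * (-z)^(n+1)) := by
      funext n
      rw [← mul_sub, neg_pow]
      simp only [hBcdef]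
      rw [pow_succ]
      ring
    rw [hfe] at hmul
    have hmul2 := (hasSum_nat_add_iff (f := fun n => Jc n * z^n - Jc n * (-z)^n) 1).mp hmul
    rw [show (∑ i ∈ Finset.range 1, (Jc i * z^i - Jc i * (-z)^i)) = 0 by
      simp [hJc0], add_zero] at hmul2
    exact hs1.unique hmul2
  -- claim 3
  have claim3 : ∀ z:ℂ, z ≠ 0 → ‖z‖ < q^3/2 →
      Dq q (fun ζ => ζ * Dq q (Jop q η h) ζ) z = SC z := by
    intro z hz0 hzr
    have hq3 : ‖(q:ℂ)*z‖ < q^2/2 := by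
      rw [hnormq]
      exact lt_of_le_of_lt (mul_le_of_le_one_left (norm_nonneg z) hq1.le)
        (lt_trans hzr hr0ltr1)
    have hq4 : ‖z/(q:ℂ)‖ < q^2/2 := by
      rw [hnormdiv, div_lt_iff₀ hq0]
      have hring : q^2/2*q = q^3/2 := by ring
      linarith
    have hqz0 : (q:ℂ)*z ≠ 0 := mul_ne_zero hqC hz0
    have hzq0 : z/(q:ℂ) ≠ 0 := div_ne_zero hz0 hqC
    rw [Dq, if_neg hz0]
    beta_reduce
    rw [claim1 _ hqz0 hq3, claim1 _ hzq0 hq4]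
    have hs1 := ((hSAs _ hq3).mul_left ((q:ℂ)*z)).sub ((hSAs _ hq4).mul_left (z/(q:ℂ)))
    have hmul := (hSCs z (lt_trans hzr hr0ltr1)).mul_left (((q:ℂ)-(q:ℂ)⁻¹) * z)
    have hfe : (fun n => ((q:ℂ)-(q:ℂ)⁻¹) * z * (Cc n * z^n))
        = (fun n => (q:ℂ)*z * (Ac n * ((q:ℂ)*z)^n) - z/(q:ℂ) * (Ac n * (z/(q:ℂ))^n)) := by
      funext n
      rw [show (q:ℂ)*z * (Ac n * ((q:ℂ)*z)^n) - z/(q:ℂ) * (Ac n * (z/(q:ℂ))^n)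
          = Ac n * (((q:ℂ)*z)^(n+1) - (z/(q:ℂ))^(n+1)) by rw [pow_succ, pow_succ]; ring]
      rw [symQ_keyC hq0 hq1 (n+1) z]
      simp only [hAcdef, hCcdef, hscdef]
      rw [pow_succ]
      ring
    rw [hfe] at hmul
    rw [hs1.unique hmul]
    exact mul_div_cancel_left₀ _ (mul_ne_zero hdC hz0)
  -- claim 4
  have claim4 : ∀ z:ℂ, z ≠ 0 → ‖z‖ < q^3/2 →
      Dq q (fun ζ => Jop q η h ζ - Jop q η h (-ζ)) z = SD z := by
    intro z hz0 hzr
    have hq3 : ‖(q:ℂ)*z‖ < q^2/2 := by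
      rw [hnormq]
      exact lt_of_le_of_lt (mul_le_of_le_one_left (norm_nonneg z) hq1.le)
        (lt_trans hzr hr0ltr1)
    have hq4 : ‖z/(q:ℂ)‖ < q^2/2 := by
      rw [hnormdiv, div_lt_iff₀ hq0]
      have hring : q^2/2*q = q^3/2 := by ring
      linarith
    rw [Dq, if_neg hz0]
    beta_reduce
    rw [claim2 _ hq3, claim2 _ hq4]
    have hs1 := ((hSBs _ hq3).mul_left ((q:ℂ)*z)).sub ((hSBs _ hq4).mul_left (z/(q:ℂ)))
    have hmul := (hSDs z (lt_trans hzr hr0ltr1)).mul_left (((q:ℂ)-(q:ℂ)⁻¹) * z)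
    have hfe : (fun n => ((q:ℂ)-(q:ℂ)⁻¹) * z * (Dc n * z^n))
        = (fun n => (q:ℂ)*z * (Bc n * ((q:ℂ)*z)^n) - z/(q:ℂ) * (Bc n * (z/(q:ℂ))^n)) := by
      funext n
      rw [show (q:ℂ)*z * (Bc n * ((q:ℂ)*z)^n) - z/(q:ℂ) * (Bc n * (z/(q:ℂ))^n)
          = Bc n * (((q:ℂ)*z)^(n+1) - (z/(q:ℂ))^(n+1)) by rw [pow_succ, pow_succ]; ring]
      rw [symQ_keyC hq0 hq1 (n+1) z]
      simp only [hBcdef, hDcdef, hscdef]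
      rw [pow_succ]
      ring
    rw [hfe] at hmul
    rw [hs1.unique hmul]
    exact mul_div_cancel_left₀ _ (mul_ne_zero hdC hz0)
  -- values at 0 of coefficient sequences
  have hAc0 : Ac 0 = 1 := by simp [hAcdef, hJc1, hsc1]
  have hBc0 : Bc 0 = 2 := by simp [hBcdef, hJc1]; norm_num
  have hCc0 : Cc 0 = 1 := by simp [hCcdef, hJc1, hsc1]
  have hDc0 : Dc 0 = 2 := by simp [hDcdef, hJc1, hsc1]; norm_num
  have hBc1 : Bc 1 = 0 := by simp [hBcdef]
  have hDc1 : Dc 1 = 0 := by simp [hDcdef]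
  have hAc1 : Ac 1 = Jc 2 * sc 2 := by norm_num [hAcdef]
  have hCc1 : Cc 1 = Jc 2 * sc 2 ^ 2 := by norm_num [hCcdef]
  -- the comparison function G
  set G : ℂ → ℂ := fun z => (2 * SA z ^ (lam:ℂ) / SB z) ^ (mu:ℂ) *
      (2 * SC z ^ (lam:ℂ) / SD z) ^ ((1 - mu : ℝ):ℂ) with hGdef
  have hPhiG : ∀ z:ℂ, z ≠ 0 → ‖z‖ < q^3/2 → Phi q η lam mu h z = G z := by
    intro z hz0 hzr
    have hzr1 : ‖z‖ < q^2/2 := lt_trans hzr hr0ltr1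
    rw [Phi, claim1 z hz0 hzr1, claim2 z hzr1, claim3 z hz0 hzr, claim4 z hz0 hzr]
    simp only [hGdef]
    have hquot : (2:ℂ) * z * SA z ^ (lam:ℂ) / (z * SB z) = 2 * SA z ^ (lam:ℂ) / SB z := by
      rw [show (2:ℂ) * z * SA z ^ (lam:ℂ) = z * (2 * SA z ^ (lam:ℂ)) by ring]
      exact mul_div_mul_left _ _ hz0
    rw [hquot]
  -- values of the two quotient functions at 0
  have hP0 : (2:ℂ) * SA 0 ^ (lam:ℂ) / SB 0 = 1 := by
    rw [hSA0, hAc0, hSB0, hBc0, Complex.one_cpow]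
    norm_num
  have hQ0 : (2:ℂ) * SC 0 ^ (lam:ℂ) / SD 0 = 1 := by
    rw [hSC0, hCc0, hSD0, hDc0, Complex.one_cpow]
    norm_num
  -- derivatives of the quotients at 0
  have hPd : HasDerivAt (fun z => 2 * SA z ^ (lam:ℂ) / SB z) ((lam:ℂ) * Ac 1) 0 := by
    have h1 := hSAd.cpow_const (c := (lam:ℂ))
      (by rw [hSA0, hAc0]; exact Complex.one_mem_slitPlane)
    have h2 := (h1.const_mul (2:ℂ)).div hSBd (by rw [hSB0, hBc0]; norm_num)
    refine h2.congr_deriv ?_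
    rw [hSA0, hAc0, hSB0, hBc0, hBc1, Complex.one_cpow, Complex.one_cpow]
    ring
  have hQd : HasDerivAt (fun z => 2 * SC z ^ (lam:ℂ) / SD z) ((lam:ℂ) * Cc 1) 0 := by
    have h1 := hSCd.cpow_const (c := (lam:ℂ))
      (by rw [hSC0, hCc0]; exact Complex.one_mem_slitPlane)
    have h2 := (h1.const_mul (2:ℂ)).div hSDd (by rw [hSD0, hDc0]; norm_num)
    refine h2.congr_deriv ?_
    rw [hSC0, hCc0, hSD0, hDc0, hDc1, Complex.one_cpow, Complex.one_cpow]
    ring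
  -- derivative of G at 0
  have hGP : HasDerivAt (fun z => (2 * SA z ^ (lam:ℂ) / SB z) ^ (mu:ℂ))
      ((mu:ℂ) * ((lam:ℂ) * Ac 1)) 0 := by
    have h1 := hPd.cpow_const (c := (mu:ℂ))
      (by show (2:ℂ) * SA 0 ^ (lam:ℂ) / SB 0 ∈ Complex.slitPlane
          rw [hP0]; exact Complex.one_mem_slitPlane)
    convert h1 using 1
    rw [hP0, Complex.one_cpow]
    ring
  have hGQ : HasDerivAt (fun z => (2 * SC z ^ (lam:ℂ) / SD z) ^ ((1 - mu : ℝ):ℂ))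
      (((1 - mu : ℝ):ℂ) * ((lam:ℂ) * Cc 1)) 0 := by
    have h1 := hQd.cpow_const (c := ((1 - mu : ℝ):ℂ))
      (by show (2:ℂ) * SC 0 ^ (lam:ℂ) / SD 0 ∈ Complex.slitPlane
          rw [hQ0]; exact Complex.one_mem_slitPlane)
    convert h1 using 1
    rw [hQ0, Complex.one_cpow]
    ring
  have hGd : HasDerivAt G
      ((mu:ℂ) * ((lam:ℂ) * Ac 1) + ((1 - mu : ℝ):ℂ) * ((lam:ℂ) * Cc 1)) 0 := by
    have h1 := hGP.mul hGQ
    rw [hGdef]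
    refine h1.congr_deriv ?_
    rw [hP0, hQ0, Complex.one_cpow, Complex.one_cpow]
    ring
  -- the subordination side
  obtain ⟨hwa, hw0, hwb⟩ := hw
  have h0ball : (0:ℂ) ∈ ball (0:ℂ) 1 := mem_ball_self one_pos
  have hφat : AnalyticAt ℂ φ 0 := hφa 0 h0ball
  have hwat : AnalyticAt ℂ w 0 := hwa 0 h0ball
  have hφd : HasDerivAt φ (deriv φ 0) 0 := hφat.differentiableAt.hasDerivAt
  have hwd : HasDerivAt w (deriv w 0) 0 := hwat.differentiableAt.hasDerivAt
  have hφd' : HasDerivAt φ (deriv φ 0) (w 0) := by rwa [hw0]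
  have hcomp : HasDerivAt (fun z => φ (w z)) (deriv φ 0 * deriv w 0) 0 := by
    have := hφd'.comp 0 hwd
    exact this
  have hG0 : G 0 = 1 := by
    simp only [hGdef]
    rw [hP0, hQ0, Complex.one_cpow, Complex.one_cpow, one_mul]
  have hev : (fun z => φ (w z)) =ᶠ[nhds (0:ℂ)] G := by
    have hmin : (0:ℝ) < min (q^3/2) 1 := lt_min hr0pos one_pos
    refine Filter.eventually_of_mem (Metric.ball_mem_nhds (0:ℂ) hmin) (fun z hz => ?_)
    rw [mem_ball_zero_iff] at hz
    rcases eq_or_ne z 0 with rfl | hz0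
    · show φ (w 0) = G 0
      rw [hw0, hφ0, hG0]
    · have hz1 : z ∈ ball (0:ℂ) 1 := by
        rw [mem_ball_zero_iff]; exact lt_of_lt_of_le hz (min_le_right _ _)
      show φ (w z) = G z
      rw [← hsub z hz1 hz0, hPhiG z hz0 (lt_of_lt_of_le hz (min_le_left _ _))]
  have hcomp' : HasDerivAt (fun z => φ (w z))
      ((mu:ℂ) * ((lam:ℂ) * Ac 1) + ((1 - mu : ℝ):ℂ) * ((lam:ℂ) * Cc 1)) 0 :=
    hGd.congr_of_eventuallyEq hev
  have hkey : deriv φ 0 * deriv w 0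
      = (mu:ℂ) * ((lam:ℂ) * Ac 1) + ((1 - mu : ℝ):ℂ) * ((lam:ℂ) * Cc 1) :=
    hcomp.unique hcomp'
  -- deriv φ 0 = E1
  have hφtaylor : E = fun n => taylorCoeff φ n := by
    refine coeffs_eq_taylor hφa.differentiableOn hφE (fun t ht0 ht1 => ?_)
    have htb : ((t:ℝ):ℂ) ∈ ball (0:ℂ) 1 := by
      rw [mem_ball_zero_iff, Complex.norm_real, Real.norm_of_nonneg ht0.le]; exact ht1
    intro hzero
    have hre := hφre _ htb
    rw [hzero] at hre
    simp at hre
  have hderivφ : deriv φ 0 = (E1:ℂ) := by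
    have h1 : E 1 = taylorCoeff φ 1 := congrFun hφtaylor 1
    rw [hE1] at h1
    have h2 : taylorCoeff φ 1 = deriv φ 0 := by simp [taylorCoeff, iteratedDeriv_one]
    rw [← h2, ← h1]
  -- c 1 = 2 * deriv w 0
  have hwne : ∀ z ∈ ball (0:ℂ) 1, (1:ℂ) - w z ≠ 0 := by
    intro z hz
    have hwz := hwb z hz
    rw [mem_ball_zero_iff] at hwz
    intro hcontra
    rw [sub_eq_zero] at hcontra
    rw [← hcontra] at hwz
    simp at hwz
  have hwne1 : ∀ z ∈ ball (0:ℂ) 1, (1:ℂ) + w z ≠ 0 := by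
    intro z hz
    have hwz := hwb z hz
    rw [mem_ball_zero_iff] at hwz
    intro hcontra
    have hm : w z = -1 := by linear_combination hcontra
    rw [hm] at hwz
    simp at hwz
  have hFca : AnalyticOnNhd ℂ (fun z => (1 + w z) / (1 - w z)) (ball 0 1) := by
    intro z hz
    exact (analyticAt_const.add (hwa z hz)).div (analyticAt_const.sub (hwa z hz)) (hwne z hz)
  have hctaylor : c = fun n => taylorCoeff (fun z => (1 + w z) / (1 - w z)) n := by
    refine coeffs_eq_taylor hFca.differentiableOn hc (fun t ht0 ht1 => ?_)
    have htb : ((t:ℝ):ℂ) ∈ ball (0:ℂ) 1 := by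
      rw [mem_ball_zero_iff, Complex.norm_real, Real.norm_of_nonneg ht0.le]; exact ht1
    exact div_ne_zero (hwne1 _ htb) (hwne _ htb)
  have hFcd : HasDerivAt (fun z => (1 + w z) / (1 - w z)) (2 * deriv w 0) 0 := by
    have h1 : HasDerivAt (fun z => (1:ℂ) + w z) (deriv w 0) 0 := hwd.const_add 1
    have h2 : HasDerivAt (fun z => (1:ℂ) - w z) (-deriv w 0) 0 := hwd.const_sub 1
    have h3 := h1.div h2 (by show (1:ℂ) - w 0 ≠ 0; rw [hw0]; norm_num)
    refine h3.congr_deriv ?_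
    rw [hw0]
    norm_num
    ring
  have hc1 : c 1 = 2 * deriv w 0 := by
    have h1 : c 1 = taylorCoeff (fun z => (1 + w z) / (1 - w z)) 1 := congrFun hctaylor 1
    rw [h1]
    simp [taylorCoeff, iteratedDeriv_one, hFcd.deriv]
  -- final algebra
  rw [hderivφ] at hkey
  rw [hc1]
  rw [show (1:ℂ)/2 * (E1:ℂ) * (2 * deriv w 0) = (E1:ℂ) * deriv w 0 by ring, hkey]
  have hJc2 : Jc 2 = ((Lcoef q η 2 : ℝ):ℂ) * taylorCoeff h 2 := by rw [hJcdef]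
  have hsc2 : sc 2 = ((symQ q 2 : ℝ):ℂ) := by rw [hscdef]; norm_num
  rw [hAc1, hCc1, hJc2, hsc2]
  have hM2 : ((M2v q mu : ℝ):ℂ) = (mu:ℂ) + ((1 - mu : ℝ):ℂ) * ((symQ q 2 : ℝ):ℂ) := by
    rw [M2v]
    push_cast
    ring
  rw [hM2]
  ring



lemma inverse_taylor2 {f g : ℂ → ℂ}
    (hf : AnalyticOnNhd ℂ f (ball 0 1)) (hf0 : f 0 = 0) (hf1 : deriv f 0 = 1)
    (hg : AnalyticOnNhd ℂ g (ball 0 1))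
    (hgf : ∀ᶠ z in nhds (0:ℂ), g (f z) = z) :
    deriv g 0 = 1 ∧ taylorCoeff g 2 = - taylorCoeff f 2 := by
  have h0b : (0:ℂ) ∈ ball (0:ℂ) 1 := mem_ball_self one_pos
  have hfat : AnalyticAt ℂ f 0 := hf 0 h0b
  have hfball : ∀ᶠ z in nhds (0:ℂ), f z ∈ ball (0:ℂ) 1 := by
    have hmem : ball (0:ℂ) 1 ∈ nhds (f 0) := by
      rw [hf0]; exact Metric.ball_mem_nhds _ one_pos
    exact hfat.continuousAt hmem
  have hzball : ∀ᶠ z in nhds (0:ℂ), z ∈ ball (0:ℂ) 1 :=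
    Filter.eventually_of_mem (Metric.ball_mem_nhds _ one_pos) (fun z hz => hz)
  have hgfev : ∀ᶠ z in nhds (0:ℂ), ∀ᶠ y in nhds z, g (f y) = y := hgf.eventually_nhds
  have hchain : ∀ᶠ z in nhds (0:ℂ), deriv g (f z) * deriv f z = 1 := by
    filter_upwards [hgfev, hfball, hzball] with z hz1 hz2 hz3
    have heq : (fun y => g (f y)) =ᶠ[nhds z] (fun y => y) := hz1
    have hdgf : deriv (fun y => g (f y)) z = 1 := by
      rw [heq.deriv_eq]
      exact deriv_id z
    calc deriv g (f z) * deriv f z = deriv (g ∘ f) z :=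
          (deriv_comp z ((hg _ hz2).differentiableAt) ((hf _ hz3).differentiableAt)).symm
      _ = 1 := hdgf
  have hD0 : deriv g (f 0) * deriv f 0 = 1 := hchain.self_of_nhds
  rw [hf0, hf1, mul_one] at hD0
  refine ⟨hD0, ?_⟩
  have hdg_an : AnalyticOnNhd ℂ (deriv g) (ball 0 1) := hg.deriv
  have hdf_an : AnalyticOnNhd ℂ (deriv f) (ball 0 1) := hf.deriv
  have hdgf0 : HasDerivAt (fun z => deriv g (f z)) (deriv (deriv g) 0 * deriv f 0) 0 := by
    have h1 : HasDerivAt (deriv g) (deriv (deriv g) 0) (f 0) := by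
      rw [hf0]; exact ((hdg_an 0 h0b).differentiableAt).hasDerivAt
    have h2 : HasDerivAt f (deriv f 0) 0 := hfat.differentiableAt.hasDerivAt
    have h3 := h1.comp 0 h2
    exact h3
  have hdf0 : HasDerivAt (deriv f) (deriv (deriv f) 0) 0 :=
    ((hdf_an 0 h0b).differentiableAt).hasDerivAt
  have hprod : HasDerivAt (fun z => deriv g (f z) * deriv f z)
      (deriv (deriv g) 0 * deriv f 0 * deriv f 0 + deriv g (f 0) * deriv (deriv f) 0) 0 :=
    hdgf0.mul hdf0
  have hev1 : (fun z => deriv g (f z) * deriv f z) =ᶠ[nhds (0:ℂ)] (fun _ => 1) := hchain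
  have hder0 : deriv (fun z => deriv g (f z) * deriv f z) 0 = 0 := by
    rw [hev1.deriv_eq]
    exact deriv_const 0 1
  have hval := hprod.deriv
  rw [hder0, hf0, hf1, hD0] at hval
  -- hval : 0 = d2g * 1 * 1 + 1 * d2f
  have hit : ∀ F : ℂ → ℂ, taylorCoeff F 2 = deriv (deriv F) 0 / 2 := by
    intro F
    rw [taylorCoeff, iteratedDeriv_succ, iteratedDeriv_one]
    norm_num
  rw [hit, hit]
  linear_combination (-1/2 : ℂ) * hval

theorem coeff_relations_bernardi
    (q : ℝ) (hq0 : 0 < q) (hq1 : q < 1)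
    (f g : ℂ → ℂ) (a : ℕ → ℂ)
    (hf : AnalyticOnNhd ℂ f (ball 0 1)) (hf0 : f 0 = 0) (hf'0 : deriv f 0 = 1)
    (hfa : ∀ z ∈ ball (0 : ℂ) 1, f z = ∑' n, a n * z ^ n)
    (ha0 : a 0 = 0) (ha1 : a 1 = 1)
    (hfinj : InjOn f (ball 0 1))
    (hg : AnalyticOnNhd ℂ g (ball 0 1)) (hg0 : g 0 = 0)
    (hginj : InjOn g (ball 0 1))
    (hgf : ∀ᶠ z in nhds (0 : ℂ), g (f z) = z)
    (φ : ℂ → ℂ) (E : ℕ → ℂ) (E1 : ℝ)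
    (hφa : AnalyticOnNhd ℂ φ (ball 0 1)) (hφ0 : φ 0 = 1)
    (hφre : ∀ z ∈ ball (0 : ℂ) 1, 0 < (φ z).re)
    (hφE : ∀ z ∈ ball (0 : ℂ) 1, φ z = ∑' n, E n * z ^ n)
    (hE0 : E 0 = 1) (hE1 : E 1 = (E1 : ℂ)) (hE1pos : 0 < E1)
    (lam : ℝ) (hlam : 1 ≤ lam)
    (η : ℝ) (hη : -1 < η)
    (mu : ℝ) (hmu : 0 ≤ mu)
    (u v : ℂ → ℂ) (hu : IsSchwarz u) (hv : IsSchwarz v)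
    (hsubf : ∀ z ∈ ball (0 : ℂ) 1, z ≠ 0 → Phi q η lam mu f z = φ (u z))
    (hsubg : ∀ w ∈ ball (0 : ℂ) 1, w ≠ 0 → Phi q η lam mu g w = φ (v w))
    (c d : ℕ → ℂ) (hc0 : c 0 = 1) (hd0 : d 0 = 1)
    (hc : ∀ z ∈ ball (0 : ℂ) 1, (1 + u z) / (1 - u z) = ∑' n, c n * z ^ n)
    (hd : ∀ w ∈ ball (0 : ℂ) 1, (1 + v w) / (1 - v w) = ∑' n, d n * w ^ n)
    :
    d 1 = -c 1 ∧
      (lam : ℂ) * (M2v q mu : ℂ) * (symQ q 2 : ℂ) * (Lcoef q η 2 : ℂ) * a 2 =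
        1 / 2 * (E1 : ℂ) * c 1 := by
  have h0b : (0:ℂ) ∈ ball (0:ℂ) 1 := mem_ball_self one_pos
  have hfM := master q hq0 hq1 η hη lam mu f hf hf0 hf'0 φ E E1 hφa hφ0 hφre hφE hE1
    u hu hsubf c hc
  obtain ⟨hg1, hg2c⟩ := inverse_taylor2 hf hf0 hf'0 hg hgf
  have hgM := master q hq0 hq1 η hη lam mu g hg hg0 hg1 φ E E1 hφa hφ0 hφre hφE hE1
    v hv hsubg d hd
  have hat : a = fun n => taylorCoeff f n := by
    refine coeffs_eq_taylor hf.differentiableOn hfa (fun t ht0 ht1 => ?_)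
    have htb : ((t:ℝ):ℂ) ∈ ball (0:ℂ) 1 := by
      rw [mem_ball_zero_iff, Complex.norm_real, Real.norm_of_nonneg ht0.le]; exact ht1
    intro h0
    have heq : ((t:ℝ):ℂ) = 0 := hfinj htb h0b (by rw [h0, hf0])
    have ht0' : t = 0 := by exact_mod_cast heq
    linarith
  have ha2 : a 2 = taylorCoeff f 2 := congrFun hat 2
  have hE1ne : (E1:ℂ) ≠ 0 := by
    simp only [ne_eq, Complex.ofReal_eq_zero]
    exact ne_of_gt hE1pos
  constructor
  · rw [hg2c] at hgM
    have hsum : (E1:ℂ) * (d 1 + c 1) = 0 := by linear_combination -2 * hgM - 2 * hfM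
    rcases mul_eq_zero.mp hsum with hbad | hok
    · exact absurd hbad hE1ne
    · linear_combination hok
  · rw [ha2]
    exact hfM
end
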